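/- Let Ω = [0,2π]^d, κ > 0, 0 < ε < κ, and let W ∈ C²(ℝ) satisfy b₁z^{2m} − b₂ ≤ W(z) + (ε/2)z² for all z, with b₁, b₂ > 0 and integer m > 1. Then there exist constants γ₀ > 0 and C₀ ≥ 0 (depending only on κ, ε, b₁, b₂, m, |Ω|) such that for every Ω-periodic u ∈ H²(Ω), ∫_Ω [W(u) + κ((1/2)u² − |∇u|² + (1/2)|Δu|²)] dx ≥ γ₀ (∫_Ω u² dx + ∫_Ω |Δu|² dx) − C₀. -/

import Mathlib

open MeasureTheory Real

noncomputable def pd {d : ℕ} (i : Fin d) (f : (Fin d → ℝ) → ℝ) (x : Fin d → ℝ) : ℝ :=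
  fderiv ℝ f x (Pi.single i 1)

noncomputable def gradNormSq {d : ℕ} (u : (Fin d → ℝ) → ℝ) (x : Fin d → ℝ) : ℝ :=
  ∑ i, (pd i u x) ^ 2

noncomputable def lap {d : ℕ} (u : (Fin d → ℝ) → ℝ) (x : Fin d → ℝ) : ℝ :=
  ∑ i, pd i (pd i u) x

def Box (d : ℕ) : Set (Fin d → ℝ) := Set.univ.pi fun _ => Set.Icc 0 (2 * π)

lemma box_eq (d : ℕ) : Box d = Set.Icc (0 : Fin d → ℝ) (fun _ => 2 * π) := by
  rw [← Set.pi_univ_Icc]; rfl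

lemma insertNth_front {n : ℕ} (i : Fin (n+1)) (y : Fin n → ℝ) :
    (i.insertNth (2 * π) y : Fin (n+1) → ℝ)
      = (i.insertNth (0:ℝ) y : Fin (n+1) → ℝ) + Pi.single i (2 * π) := by
  funext j
  rcases eq_or_ne j i with rfl | hj
  · simp
  · rcases Fin.exists_succAbove_eq hj with ⟨k, rfl⟩
    simp [Pi.single_eq_of_ne (Fin.succAbove_ne i k)]

lemma pd_cont {d : ℕ} (i : Fin d) (h : (Fin d → ℝ) → ℝ) (hh : ContDiff ℝ 1 h) :
    Continuous (pd i h) :=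
  (hh.continuous_fderiv one_ne_zero).clm_apply continuous_const

lemma integral_pd_eq_zero {n : ℕ} (i : Fin (n+1)) (h : (Fin (n+1) → ℝ) → ℝ)
    (hh : ContDiff ℝ 1 h) (hper : ∀ x j, h (x + Pi.single j (2*π)) = h x) :
    ∫ x in Box (n+1), pd i h x = 0 := by
  rw [box_eq]
  have hle : (0 : Fin (n+1) → ℝ) ≤ fun _ => 2 * π := fun j => by positivity
  have hsum : (fun x => ∑ j : Fin (n+1), (if j = i then fderiv ℝ h x else 0) (Pi.single j 1))
      = pd i h := by
    funext x
    rw [Finset.sum_eq_single i] <;> simp +contextual [pd]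
  have key := integral_divergence_of_hasFDerivAt_off_countable' 0 (fun _ => 2 * π) hle
    (fun j x => if j = i then h x else 0)
    (fun j x => if j = i then fderiv ℝ h x else 0) ∅ Set.countable_empty
    (by
      intro j
      rcases eq_or_ne j i with rfl | hj
      · simpa using hh.continuous.continuousOn
      · simp only [if_neg hj]; exact continuousOn_const)
    (by
      intro x _ j
      rcases eq_or_ne j i with rfl | hj
      · simpa using (hh.differentiable one_ne_zero x).hasFDerivAt
      · simp only [if_neg hj]
        exact hasFDerivAt_const 0 x)
    (by
      rw [hsum]
      exact (pd_cont i h hh).continuousOn.integrableOn_compact isCompact_Icc)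
  rw [hsum] at key
  rw [key]
  apply Finset.sum_eq_zero
  intro j _
  rcases eq_or_ne j i with rfl | hj
  · simp only [if_pos rfl]
    have : ∀ y : Fin n → ℝ, h (j.insertNth ((fun _ : Fin (n+1) => 2 * π) j) y)
        = h (j.insertNth ((0 : Fin (n+1) → ℝ) j) y) := by
      intro y
      show h (j.insertNth (2 * π) y) = h (j.insertNth (0:ℝ) y)
      rw [insertNth_front, hper]
    simp [this]
  · simp [hj]

lemma pd_contDiff {d : ℕ} (i : Fin d) (u : (Fin d → ℝ) → ℝ) (hu : ContDiff ℝ 2 u) :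
    ContDiff ℝ 1 (pd i u) :=
  (hu.fderiv_right (m := 1) (by norm_num)).clm_apply contDiff_const

lemma pd_per {d : ℕ} (i : Fin d) (u : (Fin d → ℝ) → ℝ) (hu : Differentiable ℝ u)
    (hper : ∀ x : Fin d → ℝ, ∀ j : Fin d, u (x + Pi.single j (2 * π)) = u x) :
    ∀ x : Fin d → ℝ, ∀ j : Fin d, pd i u (x + Pi.single j (2 * π)) = pd i u x := by
  intro x j
  set c : Fin d → ℝ := Pi.single j (2 * π) with hc
  have h1 : HasFDerivAt (fun y => u (y + c)) (fderiv ℝ u (x + c)) x := by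
    simpa [Function.comp_def] using (hu (x + c)).hasFDerivAt.comp x ((hasFDerivAt_id x).add_const c)
  have h2 : (fun y => u (y + c)) = u := funext fun y => hper y j
  rw [h2] at h1
  simp only [pd, h1.fderiv]

lemma pd_mul {d : ℕ} (i : Fin d) (f g : (Fin d → ℝ) → ℝ) (hf : Differentiable ℝ f)
    (hg : Differentiable ℝ g) (x : Fin d → ℝ) :
    pd i (fun y => f y * g y) x = pd i f x * g x + f x * pd i g x := by
  simp only [pd, fderiv_fun_mul (hf x) (hg x)]
  simp only [ContinuousLinearMap.add_apply, ContinuousLinearMap.smul_apply, smul_eq_mul]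
  ring

lemma integral_ibp {n : ℕ} (i : Fin (n+1)) (u : (Fin (n+1) → ℝ) → ℝ) (hu : ContDiff ℝ 2 u)
    (hper : ∀ x : Fin (n+1) → ℝ, ∀ j : Fin (n+1), u (x + Pi.single j (2 * π)) = u x) :
    ∫ x in Box (n+1), ((pd i u x) ^ 2 + u x * pd i (pd i u) x) = 0 := by
  have hpu : ContDiff ℝ 1 (pd i u) := pd_contDiff i u hu
  have h0 := integral_pd_eq_zero i (fun y => u y * pd i u y)
    ((hu.of_le (by norm_num)).mul hpu)
    (fun x j => by
      show u (x + Pi.single j (2*π)) * pd i u (x + Pi.single j (2*π)) = u x * pd i u x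
      rw [hper x j, pd_per i u (hu.differentiable (by norm_num)) hper x j])
  have heq : ∀ x, pd i (fun y => u y * pd i u y) x = (pd i u x) ^ 2 + u x * pd i (pd i u) x := by
    intro x
    rw [pd_mul i u (pd i u) (hu.differentiable (by norm_num)) (hpu.differentiable one_ne_zero)]
    ring
  rw [← h0]
  exact setIntegral_congr_fun (by rw [box_eq]; exact measurableSet_Icc) (fun x _ => (heq x).symm)

lemma amgm {b₁ lam : ℝ} (hb : 0 < b₁) (hl : 0 < lam) {m : ℕ} (hm : 1 < m) (z : ℝ) :
    lam * z ^ 2 ≤ b₁ * z ^ (2 * m) + lam * max 1 (lam / b₁) := by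
  set R := max 1 (lam / b₁) with hR
  have hR1 : (1:ℝ) ≤ R := le_max_left _ _
  have hR0 : (0:ℝ) ≤ R := by linarith
  have hz2m : z ^ (2 * m) = (z ^ 2) ^ m := by rw [← pow_mul]
  have hz0 : 0 ≤ z ^ 2 := sq_nonneg z
  rcases le_or_gt (z ^ 2) R with h | h
  · have h1 : lam * z ^ 2 ≤ lam * R := by nlinarith
    have h2 : 0 ≤ b₁ * z ^ (2 * m) := by
      rw [hz2m]; positivity
    linarith
  · have h1 : R ^ (m - 1) ≤ (z ^ 2) ^ (m - 1) :=
      pow_le_pow_left₀ hR0 h.le _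
    have h2 : R ≤ R ^ (m - 1) := by
      calc R = R ^ 1 := (pow_one R).symm
      _ ≤ R ^ (m - 1) := pow_le_pow_right₀ hR1 (by omega)
    have h3 : lam / b₁ ≤ (z ^ 2) ^ (m - 1) := le_trans (le_trans (le_max_right _ _) h2) h1
    have h4 : lam ≤ b₁ * (z ^ 2) ^ (m - 1) := by
      rw [div_le_iff₀ hb] at h3; linarith [h3]
    have h5 : (z ^ 2) ^ m = (z ^ 2) ^ (m - 1) * z ^ 2 := by
      rw [← pow_succ]; congr 1; omega
    have h6 : lam * z ^ 2 ≤ b₁ * (z ^ 2) ^ (m - 1) * z ^ 2 := by nlinarith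
    rw [hz2m, h5]
    nlinarith [hl.le, hR0]

lemma pointwise_bound {κ ε b₁ b₂ : ℝ} {m : ℕ} (hε : 0 < ε) (hεκ : ε < κ) (hb₁ : 0 < b₁)
    (hm : 1 < m) {W : ℝ → ℝ}
    (hgrow : ∀ z : ℝ, b₁ * z ^ (2 * m) - b₂ ≤ W z + ε / 2 * z ^ 2) (z L : ℝ) :
    κ/4 * z ^ 2 + κ/4 * L ^ 2 - (((κ+ε)/2 + κ/4) * max 1 (((κ+ε)/2 + κ/4) / b₁) + b₂)
      ≤ W z + κ * ((1/2) * z ^ 2 + z * L + (1/2) * L ^ 2) := by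
  set lam : ℝ := (κ+ε)/2 + κ/4 with hlam
  have hl : 0 < lam := by simp only [hlam]; linarith
  have h1 := amgm hb₁ hl hm z
  have h2 := hgrow z
  have h3 : z * L ≥ - z ^ 2 - L ^ 2 / 4 := by nlinarith [sq_nonneg (z + L/2)]
  nlinarith [sq_nonneg L, sq_nonneg z]

theorem stmt9 (d : ℕ) (hd : 1 ≤ d) (hd3 : d ≤ 3) (κ ε : ℝ) (hε : 0 < ε) (hεκ : ε < κ)
    (W : ℝ → ℝ) (hW : ContDiff ℝ 2 W) (m : ℕ) (hm : 1 < m)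
    (b₁ b₂ : ℝ) (hb₁ : 0 < b₁) (hb₂ : 0 < b₂)
    (hgrow : ∀ z : ℝ, b₁ * z ^ (2 * m) - b₂ ≤ W z + ε / 2 * z ^ 2) :
    ∃ γ₀ C₀ : ℝ, 0 < γ₀ ∧ 0 ≤ C₀ ∧
      ∀ u : (Fin d → ℝ) → ℝ, ContDiff ℝ 2 u →
        (∀ x : Fin d → ℝ, ∀ i : Fin d, u (x + Pi.single i (2 * π)) = u x) →
        γ₀ * ((∫ x in Box d, (u x) ^ 2) + ∫ x in Box d, (lap u x) ^ 2) - C₀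
          ≤ ∫ x in Box d,
              (W (u x) + κ * ((1 / 2) * (u x) ^ 2 - gradNormSq u x
                + (1 / 2) * (lap u x) ^ 2)) := by
  obtain ⟨n, rfl⟩ : ∃ n, d = n + 1 := ⟨d - 1, by omega⟩
  set K : ℝ := ((κ+ε)/2 + κ/4) * max 1 (((κ+ε)/2 + κ/4) / b₁) + b₂ with hK
  have hK0 : 0 ≤ K := by
    have h1 : (0:ℝ) < (κ+ε)/2 + κ/4 := by linarith
    have h2 : (1:ℝ) ≤ max 1 (((κ+ε)/2 + κ/4) / b₁) := le_max_left _ _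
    have h3 := mul_pos h1 (lt_of_lt_of_le one_pos h2)
    rw [hK]
    linarith
  have hvol : (volume (Box (n+1))).toReal = (2*π)^(n+1) := by
    rw [box_eq, Real.volume_Icc_pi_toReal (fun i => by positivity)]
    simp
  refine ⟨κ/4, (2*π)^(n+1) * K, by linarith, by positivity, ?_⟩
  intro u hu hper
  have meas : MeasurableSet (Box (n+1)) := by rw [box_eq]; exact measurableSet_Icc
  have intOn : ∀ f : (Fin (n+1) → ℝ) → ℝ, Continuous f → IntegrableOn f (Box (n+1)) := by
    intro f hf; rw [box_eq]; exact hf.continuousOn.integrableOn_compact isCompact_Icc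
  have hu1 : ContDiff ℝ 1 u := hu.of_le (by norm_num)
  have cu : Continuous u := hu.continuous
  have cL : Continuous (lap u) := by
    apply continuous_finset_sum
    intro i _
    exact pd_cont i (pd i u) (pd_contDiff i u hu)
  have cG : Continuous (gradNormSq u) := by
    apply continuous_finset_sum
    intro i _
    exact (pd_cont i u hu1).pow 2
  have cW : Continuous fun x => W (u x) := hW.continuous.comp cu
  -- integration by parts
  have hibp : ∫ x in Box (n+1), (gradNormSq u x + u x * lap u x) = 0 := by
    have hpt : ∀ x, gradNormSq u x + u x * lap u x
        = ∑ i, ((pd i u x) ^ 2 + u x * pd i (pd i u) x) := by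
      intro x
      simp [gradNormSq, lap, Finset.mul_sum, Finset.sum_add_distrib]
    rw [setIntegral_congr_fun meas (fun x _ => hpt x), integral_finset_sum]
    · exact Finset.sum_eq_zero fun i _ => integral_ibp i u hu hper
    · intro i _
      exact intOn _ (((pd_cont i u hu1).pow 2).add
        (cu.mul (pd_cont i (pd i u) (pd_contDiff i u hu))))
  -- rewrite the energy using ibp
  have step1 : ∫ x in Box (n+1),
      (W (u x) + κ * ((1 / 2) * (u x) ^ 2 - gradNormSq u x + (1 / 2) * (lap u x) ^ 2))
      = ∫ x in Box (n+1),
      (W (u x) + κ * ((1 / 2) * (u x) ^ 2 + u x * lap u x + (1 / 2) * (lap u x) ^ 2)) := by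
    have hG : IntegrableOn (fun x => W (u x) + κ * ((1 / 2) * (u x) ^ 2 + u x * lap u x
        + (1 / 2) * (lap u x) ^ 2)) (Box (n+1)) :=
      intOn _ (cW.add (continuous_const.mul (((continuous_const.mul (cu.pow 2)).add (cu.mul cL)).add (continuous_const.mul (cL.pow 2)))))
    have hH : IntegrableOn (fun x => κ * (gradNormSq u x + u x * lap u x)) (Box (n+1)) :=
      intOn _ (continuous_const.mul (cG.add (cu.mul cL)))
    have : (fun x => W (u x) + κ * ((1 / 2) * (u x) ^ 2 - gradNormSq u x
        + (1 / 2) * (lap u x) ^ 2))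
        = fun x => (W (u x) + κ * ((1 / 2) * (u x) ^ 2 + u x * lap u x
          + (1 / 2) * (lap u x) ^ 2)) - κ * (gradNormSq u x + u x * lap u x) := by
      funext x; ring
    rw [this, integral_sub hG hH, integral_const_mul, hibp, mul_zero, sub_zero]
  rw [step1]
  -- pointwise lower bound and integrate
  have step2 : ∫ x in Box (n+1),
      (κ/4 * (u x) ^ 2 + κ/4 * (lap u x) ^ 2 - K)
      ≤ ∫ x in Box (n+1),
      (W (u x) + κ * ((1 / 2) * (u x) ^ 2 + u x * lap u x + (1 / 2) * (lap u x) ^ 2)) := by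
    apply setIntegral_mono_on
    · exact intOn _ (((continuous_const.mul (cu.pow 2)).add
        (continuous_const.mul (cL.pow 2))).sub continuous_const)
    · exact intOn _ (cW.add (continuous_const.mul (((continuous_const.mul (cu.pow 2)).add (cu.mul cL)).add (continuous_const.mul (cL.pow 2)))))
    · exact meas
    · intro x _
      exact pointwise_bound hε hεκ hb₁ hm hgrow (u x) (lap u x)
  have step3 : ∫ x in Box (n+1), (κ/4 * (u x) ^ 2 + κ/4 * (lap u x) ^ 2 - K)
      = κ/4 * (∫ x in Box (n+1), (u x) ^ 2) + κ/4 * (∫ x in Box (n+1), (lap u x) ^ 2)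
        - (2*π)^(n+1) * K := by
    have h1 : IntegrableOn (fun x => κ/4 * (u x) ^ 2) (Box (n+1)) :=
      intOn _ (continuous_const.mul (cu.pow 2))
    have h2 : IntegrableOn (fun x => κ/4 * (lap u x) ^ 2) (Box (n+1)) :=
      intOn _ (continuous_const.mul (cL.pow 2))
    rw [show (fun x => κ/4 * (u x) ^ 2 + κ/4 * (lap u x) ^ 2 - K)
        = fun x => (κ/4 * (u x) ^ 2 + κ/4 * (lap u x) ^ 2) - K from rfl]
    have h12 : IntegrableOn (fun x => κ/4 * (u x) ^ 2 + κ/4 * (lap u x) ^ 2) (Box (n+1)) :=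
      intOn _ ((continuous_const.mul (cu.pow 2)).add (continuous_const.mul (cL.pow 2)))
    rw [integral_sub h12 (intOn _ continuous_const)]
    rw [integral_add h1 h2, integral_const_mul, integral_const_mul, setIntegral_const,
      smul_eq_mul, measureReal_def, hvol]
  linarith [step2, step3.symm.le]
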